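/- For every ε ∈ (0,1] there exist N₀ = N₀(ε) and universal constants C, c > 0 with the following property: if N ≥ N₀ and X = (X₁,…,X_N) is a vector of independent real random variables with E X_i = 0 and E X_i² = 1 for all i, then with probability at least 1 − exp(−cεN) there exists a subset I ⊂ {1,…,N} with |I| ≥ N − εN such that ‖P_I X‖ ≤ C√N. -/

import Mathlib

open MeasureTheory ProbabilityTheory Finset

/-- (Lemma 3.1.) For every `ε ∈ (0,1]` there is `N₀ = N₀(ε)` and
universal constants `C, c > 0` such that for `N ≥ N₀` and independent random variables
`X₁,…,X_N` with zero mean and unit variance, with probability at least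
`1 − exp(−cεN)` there is `I ⊆ {1,…,N}` with `|I| ≥ N − εN` and `‖P_I X‖ ≤ C√N`. -/
theorem min_coordinate_projection_bound :
    ∃ C c : ℝ, 0 < C ∧ 0 < c ∧
      ∀ ε : ℝ, 0 < ε → ε ≤ 1 →
        ∃ N₀ : ℕ, ∀ N : ℕ, N₀ ≤ N →
          ∀ (Ω : Type) [MeasureSpace Ω] [IsProbabilityMeasure (ℙ : Measure Ω)]
            (X : Fin N → Ω → ℝ),
            (∀ i, Measurable (X i)) →
            iIndepFun X ℙ →
            (∀ i, ∫ ω, X i ω = 0) →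
            (∀ i, ∫ ω, (X i ω) ^ 2 = 1) →
            1 - ENNReal.ofReal (Real.exp (-(c * ε * N))) ≤
              ℙ {ω | ∃ I : Finset (Fin N), (N : ℝ) - ε * N ≤ I.card ∧
                    Real.sqrt (∑ i ∈ I, (X i ω) ^ 2) ≤ C * Real.sqrt N} := by
  refine ⟨2, 1/2, by norm_num, by norm_num, fun ε hε hε1 => ⟨0, fun N _ Ω _ _ X hmeas hindep hmean hvar => ?_⟩⟩
  set M : ℝ := 4 / ε with hMdef
  have hM0 : 0 < M := by positivity
  set t : ℝ := 1 / M with htdef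
  have ht0 : 0 < t := by positivity
  have htM : t * M = 1 := by rw [htdef, one_div, inv_mul_cancel₀ hM0.ne']
  set Z : Fin N → Ω → ℝ := fun i ω => min ((X i ω) ^ 2) M with hZdef
  have hZmeas : ∀ i, Measurable (Z i) := fun i => ((hmeas i).pow_const 2).min measurable_const
  have hZ0 : ∀ i ω, 0 ≤ Z i ω := fun i ω => le_min (sq_nonneg _) hM0.le
  have hZM : ∀ i ω, Z i ω ≤ M := fun i ω => min_le_right _ _
  have hZint : ∀ i, Integrable (Z i) := fun i =>
    (integrable_const M).mono' (hZmeas i).aestronglyMeasurable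
      (Filter.Eventually.of_forall fun ω => by
        rw [Real.norm_eq_abs, abs_of_nonneg (hZ0 i ω)]; exact hZM i ω)
  have hX2int : ∀ i, Integrable (fun ω => (X i ω) ^ 2) := by
    intro i
    by_contra h
    have := hvar i
    rw [integral_undef h] at this
    norm_num at this
  have hEZ : ∀ i, ∫ ω, Z i ω ≤ 1 := fun i => by
    calc ∫ ω, Z i ω ≤ ∫ ω, (X i ω) ^ 2 :=
          integral_mono (hZint i) (hX2int i) fun ω => min_le_left _ _
      _ = 1 := hvar i
  have hEZ0 : ∀ i, 0 ≤ ∫ ω, Z i ω := fun i =>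
    integral_nonneg fun ω => hZ0 i ω
  have hZindep : iIndepFun Z ℙ :=
    hindep.comp (fun i x => min (x ^ 2) M)
      (fun i => (measurable_id.pow_const 2).min measurable_const)
  -- convexity bound for exp on [0,1]
  have key : ∀ x : ℝ, 0 ≤ x → x ≤ 1 → Real.exp x ≤ 1 + (Real.exp 1 - 1) * x := by
    intro x h0 h1
    have h := convexOn_exp.2 (Set.mem_univ (0 : ℝ)) (Set.mem_univ (1 : ℝ))
      (by linarith : (0:ℝ) ≤ 1 - x) h0 (by ring)
    simp only [smul_eq_mul, mul_zero, mul_one, zero_add, Real.exp_zero] at h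
    linarith
  have hexpint : ∀ i, Integrable (fun ω => Real.exp (t * Z i ω)) := by
    intro i
    refine (integrable_const (Real.exp 1)).mono'
      (((hZmeas i).const_mul t).exp).aestronglyMeasurable
      (Filter.Eventually.of_forall fun ω => ?_)
    rw [Real.norm_eq_abs, abs_of_nonneg (Real.exp_nonneg _)]
    refine Real.exp_le_exp.2 ?_
    calc t * Z i ω ≤ t * M := by
          exact mul_le_mul_of_nonneg_left (hZM i ω) ht0.le
      _ = 1 := htM
  have htZ1 : ∀ i ω, t * Z i ω ≤ 1 := fun i ω => by
    calc t * Z i ω ≤ t * M := mul_le_mul_of_nonneg_left (hZM i ω) ht0.le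
      _ = 1 := htM
  have hmgf : ∀ i, mgf (Z i) ℙ t ≤ Real.exp ((Real.exp 1 - 1) * t) := by
    intro i
    have h1 : mgf (Z i) ℙ t ≤ 1 + (Real.exp 1 - 1) * (t * ∫ ω, Z i ω) := by
      have hint2 : Integrable (fun ω => 1 + (Real.exp 1 - 1) * (t * Z i ω)) := by
        exact (integrable_const 1).add (((hZint i).const_mul t).const_mul _)
      calc mgf (Z i) ℙ t = ∫ ω, Real.exp (t * Z i ω) := rfl
        _ ≤ ∫ ω, (1 + (Real.exp 1 - 1) * (t * Z i ω)) :=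
            integral_mono (hexpint i) hint2 fun ω =>
              key _ (by positivity) (htZ1 i ω)
        _ = 1 + (Real.exp 1 - 1) * (t * ∫ ω, Z i ω) := by
            rw [integral_add (integrable_const 1) (((hZint i).const_mul t).const_mul _)]
            simp [integral_const, integral_const_mul]
    have h2 : (Real.exp 1 - 1) * (t * ∫ ω, Z i ω) ≤ (Real.exp 1 - 1) * t := by
      have he1 : (0:ℝ) ≤ Real.exp 1 - 1 := by
        have := Real.one_le_exp (le_of_lt one_pos)
        linarith
      have : t * ∫ ω, Z i ω ≤ t * 1 := mul_le_mul_of_nonneg_left (hEZ i) ht0.le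
      nlinarith
    calc mgf (Z i) ℙ t ≤ 1 + (Real.exp 1 - 1) * t := by linarith
      _ ≤ Real.exp ((Real.exp 1 - 1) * t) := by
          have := Real.add_one_le_exp ((Real.exp 1 - 1) * t)
          linarith
  -- Chernoff bound for the sum
  set S : Ω → ℝ := ∑ i, Z i with hSdef
  have hSapp : ∀ ω, S ω = ∑ i, Z i ω := fun ω => by
    simp [hSdef]
  have hSmeas : Measurable S := by
    have h : S = fun ω => ∑ i, Z i ω := funext hSapp
    rw [h]; exact Finset.measurable_sum _ fun i _ => hZmeas i
  have hSint : Integrable (fun ω => Real.exp (t * S ω)) := by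
    refine (integrable_const (Real.exp N)).mono'
      ((hSmeas.const_mul t).exp).aestronglyMeasurable
      (Filter.Eventually.of_forall fun ω => ?_)
    rw [Real.norm_eq_abs, abs_of_nonneg (Real.exp_nonneg _)]
    refine Real.exp_le_exp.2 ?_
    rw [hSapp, Finset.mul_sum]
    calc ∑ i, t * Z i ω ≤ ∑ _i : Fin N, (1:ℝ) :=
          Finset.sum_le_sum fun i _ => htZ1 i ω
      _ = N := by simp
  have chern := measure_ge_le_exp_mul_mgf (μ := ℙ) (X := S) (4 * N) ht0.le hSint
  have hprod : mgf S ℙ t ≤ Real.exp ((Real.exp 1 - 1) * t) ^ N := by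
    rw [hSdef, hZindep.mgf_sum hZmeas]
    calc ∏ i, mgf (Z i) ℙ t ≤ ∏ _i : Fin N, Real.exp ((Real.exp 1 - 1) * t) :=
          Finset.prod_le_prod (fun i _ => mgf_nonneg) (fun i _ => hmgf i)
      _ = _ := by simp
  have hfinal : (ℙ {ω | (4 * N : ℝ) ≤ S ω}).toReal ≤ Real.exp (-(1/2 * ε * N)) := by
    have h1 : (ℙ {ω | (4 * N : ℝ) ≤ S ω}).toReal ≤
        Real.exp (-t * (4 * N)) * Real.exp ((Real.exp 1 - 1) * t) ^ N := by
      refine chern.trans ?_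
      exact mul_le_mul_of_nonneg_left hprod (Real.exp_nonneg _)
    refine h1.trans ?_
    rw [← Real.exp_nat_mul, ← Real.exp_add]
    refine Real.exp_le_exp.2 ?_
    have hexp1 : Real.exp 1 < 3 := by
      have := Real.exp_one_lt_d9
      linarith
    have htε : t = ε / 4 := by rw [htdef, hMdef]; field_simp
    rw [htε]
    have hN0 : (0:ℝ) ≤ N := Nat.cast_nonneg N
    nlinarith [mul_nonneg hε.le hN0]
  -- measure of good event
  set A : Set Ω := {ω | (4 * N : ℝ) ≤ S ω} with hAdef
  have hAmeas : MeasurableSet A := measurableSet_le measurable_const hSmeas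
  have hPA : ℙ A ≤ ENNReal.ofReal (Real.exp (-(1/2 * ε * N))) := by
    rw [← ENNReal.ofReal_toReal (measure_ne_top ℙ A)]
    exact ENNReal.ofReal_le_ofReal hfinal
  -- inclusion Aᶜ ⊆ event
  have hsub : Aᶜ ⊆ {ω | ∃ I : Finset (Fin N), (N : ℝ) - ε * N ≤ I.card ∧
      Real.sqrt (∑ i ∈ I, (X i ω) ^ 2) ≤ 2 * Real.sqrt N} := by
    intro ω hω
    have hS4 : S ω < 4 * N := by
      simpa [hAdef] using hω
    classical
    refine ⟨Finset.univ.filter (fun i => (X i ω) ^ 2 ≤ M), ?_, ?_⟩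
    · set J := Finset.univ.filter (fun i => ¬ ((X i ω) ^ 2 ≤ M)) with hJdef
      have hJM : ∀ i ∈ J, Z i ω = M := by
        intro i hi
        rw [hJdef, Finset.mem_filter] at hi
        exact min_eq_right (le_of_not_ge hi.2)
      have hJsum : (J.card : ℝ) * M ≤ S ω := by
        rw [hSapp]
        calc (J.card : ℝ) * M = ∑ i ∈ J, Z i ω := by
              rw [Finset.sum_congr rfl hJM]; simp [mul_comm]
          _ ≤ ∑ i, Z i ω :=
              Finset.sum_le_sum_of_subset_of_nonneg (Finset.subset_univ J)
                (fun i _ _ => hZ0 i ω)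
      have hJcard : (J.card : ℝ) < ε * N := by
        have h1 : (J.card : ℝ) * M < 4 * N := lt_of_le_of_lt hJsum hS4
        rw [hMdef] at h1
        have h2 : (J.card : ℝ) * (4 / ε) * ε < 4 * N * ε :=
          mul_lt_mul_of_pos_right h1 hε
        have h3 : (J.card : ℝ) * (4 / ε) * ε = (J.card : ℝ) * 4 := by
          field_simp
        nlinarith
      have hcards : (Finset.univ.filter (fun i => (X i ω) ^ 2 ≤ M)).card + J.card = N := by
        rw [hJdef]
        simpa using Finset.card_filter_add_card_filter_not
          (s := (Finset.univ : Finset (Fin N))) (p := fun i => (X i ω) ^ 2 ≤ M)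
      have : ((Finset.univ.filter (fun i => (X i ω) ^ 2 ≤ M)).card : ℝ) + J.card = N := by
        exact_mod_cast congrArg (Nat.cast (R := ℝ)) hcards
      linarith
    · have hsum : ∑ i ∈ Finset.univ.filter (fun i => (X i ω) ^ 2 ≤ M), (X i ω) ^ 2 ≤ 4 * N := by
        calc ∑ i ∈ Finset.univ.filter (fun i => (X i ω) ^ 2 ≤ M), (X i ω) ^ 2
            = ∑ i ∈ Finset.univ.filter (fun i => (X i ω) ^ 2 ≤ M), Z i ω := by
              refine Finset.sum_congr rfl fun i hi => ?_
              rw [Finset.mem_filter] at hi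
              exact (min_eq_left hi.2).symm
          _ ≤ ∑ i, Z i ω :=
              Finset.sum_le_sum_of_subset_of_nonneg (Finset.subset_univ _)
                (fun i _ _ => hZ0 i ω)
          _ ≤ 4 * N := by rw [← hSapp]; exact hS4.le
      calc Real.sqrt (∑ i ∈ Finset.univ.filter (fun i => (X i ω) ^ 2 ≤ M), (X i ω) ^ 2)
          ≤ Real.sqrt (4 * N) := Real.sqrt_le_sqrt hsum
        _ = 2 * Real.sqrt N := by
            rw [Real.sqrt_mul (by norm_num) (N : ℝ),
              show (4:ℝ) = 2 ^ 2 by norm_num, Real.sqrt_sq (by norm_num)]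
  -- conclude
  calc 1 - ENNReal.ofReal (Real.exp (-(1/2 * ε * N)))
      ≤ 1 - ℙ A := tsub_le_tsub_left hPA 1
    _ = ℙ Aᶜ := (prob_compl_eq_one_sub hAmeas).symm
    _ ≤ _ := measure_mono hsub
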